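/- Let n, k, p be nonnegative integers with n ≥ 1, k ≥ 1, and set m = n + k + p. Fix y ∈ ℝ^k and for x ∈ ℝⁿ let ẑ(x) = (x_1,…,x_n, y_1,…,y_k, 0,…,0) ∈ ℝ^m. Then for every lag t with n ≤ t ≤ m − n, the map x ↦ r_t(ẑ(x)) is affine in x: there exist a vector h ∈ ℝⁿ and a constant c ∈ ℝ (both depending only on y, t, n, k, p) such that r_t(ẑ(x)) = ⟨h, x⟩ + c for all x ∈ ℝⁿ. (These lags contain no cross-multiplications of the unknown entries x_i, yielding the linear equations in the unknown signal.) -/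
import Mathlib


/-- Circular autocorrelation at lag `t` of a real vector `z ∈ ℝ^m`
(entries indexed `0, …, m-1`): `r_t(z) = ∑_{l=0}^{m-1} z_{(l+t) mod m} · z_l`. -/
noncomputable def circAcorrR (m : ℕ) (z : ℕ → ℝ) (t : ℕ) : ℝ :=
  ∑ l ∈ Finset.range m, z ((l + t) % m) * z l

/-- The zero-padded combination `ẑ(x) = (x_0, …, x_{n-1}, y_0, …, y_{k-1}, 0, …, 0) ∈ ℝ^m`. -/
noncomputable def zhatR (n k : ℕ) (y x : ℕ → ℝ) (p : ℕ) : ℝ :=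
  if p < n then x p else if p < n + k then y (p - n) else 0

/-- For `m = n + k + p` and every lag `t` with `n ≤ t ≤ m - n`, the circular autocorrelation
`x ↦ r_t(ẑ(x))` is affine in `x`: there exist `h ∈ ℝⁿ` and `c ∈ ℝ` (depending only on
`y, t, n, k, p`) with `r_t(ẑ(x)) = ⟨h, x⟩ + c` for every `x ∈ ℝⁿ`. -/
theorem stmt4 (n k p t : ℕ) (hn : 1 ≤ n) (hk : 1 ≤ k)
    (y : ℕ → ℝ) (ht1 : n ≤ t) (ht2 : t ≤ n + k + p - n) :
    ∃ (h : ℕ → ℝ) (c : ℝ), ∀ x : ℕ → ℝ,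
      circAcorrR (n + k + p) (zhatR n k y x) t =
        (∑ i ∈ Finset.range n, h i * x i) + c := by
  set m := n + k + p with hm
  have hnm : n ≤ m := by omega
  have htm : t + n ≤ m := by omega
  -- the "y or zero" part, valid for indices ≥ n
  set zy : ℕ → ℝ := fun j => if j < n + k then y (j - n) else 0 with hzy
  refine ⟨fun i => zy (i + t) + ∑ l ∈ Finset.Ico n m, (if (l + t) % m = i then zy l else 0),
    ∑ l ∈ Finset.Ico n m, (if (l + t) % m < n then 0 else zy ((l + t) % m) * zy l),
    fun x => ?_⟩
  have hz_ge : ∀ j, n ≤ j → zhatR n k y x j = zy j := by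
    intro j hj
    simp only [zhatR, hzy]
    rw [if_neg (by omega)]
  have hsplit : circAcorrR m (zhatR n k y x) t =
      (∑ l ∈ Finset.range n, zhatR n k y x ((l + t) % m) * zhatR n k y x l) +
      ∑ l ∈ Finset.Ico n m, zhatR n k y x ((l + t) % m) * zhatR n k y x l := by
    rw [circAcorrR, Finset.range_eq_Ico,
      ← Finset.sum_Ico_consecutive _ (Nat.zero_le n) hnm, ← Finset.range_eq_Ico]
  rw [hsplit]
  -- first sum: l < n
  have h1 : ∀ l ∈ Finset.range n,
      zhatR n k y x ((l + t) % m) * zhatR n k y x l = zy (l + t) * x l := by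
    intro l hl
    rw [Finset.mem_range] at hl
    have hlt : l + t < m := by omega
    rw [Nat.mod_eq_of_lt hlt, hz_ge _ (by omega)]
    simp only [zhatR]
    rw [if_pos hl]
  rw [Finset.sum_congr rfl h1]
  -- second sum: l ≥ n
  have h2 : ∀ l ∈ Finset.Ico n m,
      zhatR n k y x ((l + t) % m) * zhatR n k y x l =
        (if (l + t) % m < n then zy l * x ((l + t) % m) else 0) +
        (if (l + t) % m < n then 0 else zy ((l + t) % m) * zy l) := by
    intro l hl
    rw [Finset.mem_Ico] at hl
    rw [hz_ge l hl.1]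
    by_cases hc : (l + t) % m < n
    · rw [if_pos hc, if_pos hc]
      simp only [zhatR]
      rw [if_pos hc]
      ring
    · rw [if_neg hc, if_neg hc, hz_ge _ (by omega)]
      ring
  rw [Finset.sum_congr rfl h2, Finset.sum_add_distrib]
  -- rearrange the linear part of the second sum
  have h3 : ∑ i ∈ Finset.range n,
        (∑ l ∈ Finset.Ico n m, (if (l + t) % m = i then zy l else 0)) * x i =
      ∑ l ∈ Finset.Ico n m, (if (l + t) % m < n then zy l * x ((l + t) % m) else 0) := by
    simp only [Finset.sum_mul, ite_mul, zero_mul]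
    rw [Finset.sum_comm]
    refine Finset.sum_congr rfl fun l hl => ?_
    rw [Finset.sum_ite_eq]
    simp [Finset.mem_range]
  rw [← h3]
  simp only [add_mul, Finset.sum_add_distrib]
  ring
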